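/- For any channel gain g > 0, noise power spectral density N₀ > 0 and any fixed power p > 0, the function b ↦ b·log₂(1 + g·p/(b·N₀)) is strictly increasing on (0, ∞). -/

import Mathlib

/-- Key inequality: for `x > 0`, `x / (1 + x) < log (1 + x)`. -/
lemma aux_log_ineq (x : ℝ) (hx : 0 < x) : x / (1 + x) < Real.log (1 + x) := by
  have h1 : (0:ℝ) < 1 + x := by linarith
  have hy : (0:ℝ) < (1 + x)⁻¹ := by positivity
  have hne : (1 + x)⁻¹ ≠ 1 := by
    intro h
    have : (1:ℝ) + x = 1 := by
      field_simp at h; linarith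
    linarith
  have := Real.log_lt_sub_one_of_pos hy hne
  rw [Real.log_inv] at this
  have heq : (1 + x)⁻¹ - 1 = -(x / (1 + x)) := by field_simp; ring
  rw [heq] at this
  linarith

lemma aux_strictMono (c : ℝ) (hc : 0 < c) :
    StrictMonoOn (fun b : ℝ => b * Real.log (1 + c / b)) (Set.Ioi 0) := by
  apply strictMonoOn_of_deriv_pos (convex_Ioi 0)
  · apply ContinuousOn.mul continuousOn_id
    apply ContinuousOn.log
    · exact continuousOn_const.add (continuousOn_const.div continuousOn_id
        fun x hx => ne_of_gt hx)
    · intro x hx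
      have hx0 : (0:ℝ) < x := hx
      positivity
  · intro x hx
    rw [interior_Ioi] at hx
    have hx0 : (0:ℝ) < x := hx
    have hpos : 0 < 1 + c / x := by positivity
    have h1 : HasDerivAt (fun b : ℝ => 1 + c / b) (c * (-(x ^ 2)⁻¹)) x := by
      have h := ((hasDerivAt_inv (ne_of_gt hx0)).const_mul c).const_add 1
      simpa [div_eq_mul_inv] using h
    have h2 : HasDerivAt (fun b : ℝ => Real.log (1 + c / b))
        ((1 + c / x)⁻¹ * (c * (-(x ^ 2)⁻¹))) x := by
      have h := (Real.hasDerivAt_log hpos.ne').comp x h1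
      exact h
    have h3 : HasDerivAt (fun b : ℝ => b * Real.log (1 + c / b))
        (1 * Real.log (1 + c / x) + x * ((1 + c / x)⁻¹ * (c * (-(x ^ 2)⁻¹)))) x :=
      (hasDerivAt_id' (x := x)).mul h2
    rw [h3.deriv]
    have key : c / (x + c) < Real.log (1 + c / x) := by
      have h := aux_log_ineq (c / x) (by positivity)
      have heq : (c / x) / (1 + c / x) = c / (x + c) := by
        rw [div_div]
        congr 1
        field_simp
      rwa [heq] at h
    have heq2 : x * ((1 + c / x)⁻¹ * (c * -(x ^ 2)⁻¹)) = -(c / (x + c)) := by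
      have hxc : x + c ≠ 0 := by positivity
      field_simp
    rw [heq2]
    linarith

/-- For `g > 0`, `N₀ > 0` and fixed power `p > 0`, the function
`b ↦ b · log₂(1 + g·p/(b·N₀))` is strictly increasing on `(0, ∞)`. -/
theorem rate_utility_strictMonoOn_bandwidth (g N₀ p : ℝ)
    (hg : 0 < g) (hN₀ : 0 < N₀) (hp : 0 < p) :
    StrictMonoOn (fun b : ℝ => b * Real.logb 2 (1 + g * p / (b * N₀))) (Set.Ioi 0) := by
  have hc : 0 < g * p / N₀ := by positivity
  have hm := aux_strictMono (g * p / N₀) hc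
  have hlog2 : 0 < Real.log 2 := Real.log_pos (by norm_num)
  intro a ha b hb hab
  have h := hm ha hb hab
  have hfun : ∀ y : ℝ, g * p / N₀ / y = g * p / (y * N₀) := by
    intro y
    rw [div_div, mul_comm N₀ y]
  simp only [Real.logb, div_eq_mul_inv]
  simp only [hfun] at h
  have := mul_lt_mul_of_pos_right h (inv_pos.mpr hlog2)
  calc a * (Real.log (1 + g * p / (a * N₀)) * (Real.log 2)⁻¹)
      = a * Real.log (1 + g * p / (a * N₀)) * (Real.log 2)⁻¹ := by ring
    _ < b * Real.log (1 + g * p / (b * N₀)) * (Real.log 2)⁻¹ := this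
    _ = b * (Real.log (1 + g * p / (b * N₀)) * (Real.log 2)⁻¹) := by ring
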